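/- The (p,q)-Rogers-Szegő polynomials H_n(x;p,q) = Σ_{k=0}^n [n choose k]_{p,q} x^k satisfy the recurrence H_{n+1}(x;p,q) = H_n(px;p,q) + x p^n H_n(p^{-1}x;p,q) - (p^n - q^n) x H_{n-1}(x;p,q) for n ≥ 1. -/

import Mathlib

/-- The (p,q)-number `[n]_{p,q} = (p^n - q^n)/(p-q)`. -/
noncomputable def pqNum (p q : ℝ) (n : ℕ) : ℝ := (p ^ n - q ^ n) / (p - q)

/-- The (p,q)-factorial `[n]_{p,q}!`. -/
noncomputable def pqFac (p q : ℝ) (n : ℕ) : ℝ := ∏ j ∈ Finset.range n, pqNum p q (j + 1)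

/-- The (p,q)-binomial coefficient. -/
noncomputable def pqBinom (p q : ℝ) (n k : ℕ) : ℝ :=
  pqFac p q n / (pqFac p q k * pqFac p q (n - k))

/-- The (p,q)-Rogers-Szegő polynomial `H_n(x;p,q)`. -/
noncomputable def pqRogersSzego (p q : ℝ) (n : ℕ) (x : ℝ) : ℝ :=
  ∑ k ∈ Finset.range (n + 1), pqBinom p q n k * x ^ k

lemma pqNum_key (p q : ℝ) (hpq : p - q ≠ 0) (a b : ℕ) :
    pqNum p q (a+b+2) = p^(a+1) * pqNum p q (b+1) + p^(b+1) * pqNum p q (a+1)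
      - (p-q) * pqNum p q (a+1) * pqNum p q (b+1) := by
  unfold pqNum
  field_simp
  ring

lemma pqFac_succ (p q : ℝ) (m : ℕ) : pqFac p q (m+1) = pqFac p q m * pqNum p q (m+1) :=
  Finset.prod_range_succ _ _

lemma pow_sub_eq (p q : ℝ) (hpq : p - q ≠ 0) (m : ℕ) :
    p ^ m - q ^ m = (p - q) * pqNum p q m := by
  rw [pqNum, mul_div_cancel₀ _ hpq]

lemma pqBinom_zero (p q : ℝ) (n : ℕ) (hF : pqFac p q n ≠ 0) : pqBinom p q n 0 = 1 := by
  rw [pqBinom, show pqFac p q 0 = 1 from Finset.prod_range_zero _, one_mul, Nat.sub_zero,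
    div_self hF]

lemma pqBinom_self (p q : ℝ) (n : ℕ) (hF : pqFac p q n ≠ 0) : pqBinom p q n n = 1 := by
  rw [pqBinom, Nat.sub_self, show pqFac p q 0 = 1 from Finset.prod_range_zero _, mul_one,
    div_self hF]

lemma pqBinom_main (p q : ℝ) (hpq : p - q ≠ 0) (a b : ℕ)
    (hFa : pqFac p q (a+1) ≠ 0) (hFb : pqFac p q (b+1) ≠ 0) :
    pqBinom p q (a+b+2) (a+1) =
      p^(a+1) * pqBinom p q (a+b+1) (a+1) + p^(b+1) * pqBinom p q (a+b+1) a
        - (p^(a+b+1) - q^(a+b+1)) * pqBinom p q (a+b) a := by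
  have h1 : a + b + 2 - (a + 1) = b + 1 := by omega
  have h2 : a + b + 1 - (a + 1) = b := by omega
  have h3 : a + b + 1 - a = b + 1 := by omega
  have h4 : a + b - a = b := by omega
  have hA : pqNum p q (a+1) ≠ 0 := fun h0 => hFa (by rw [pqFac_succ, h0, mul_zero])
  have hB : pqNum p q (b+1) ≠ 0 := fun h0 => hFb (by rw [pqFac_succ, h0, mul_zero])
  have hFa' : pqFac p q a ≠ 0 := fun h0 => hFa (by rw [pqFac_succ, h0, zero_mul])
  have hFb' : pqFac p q b ≠ 0 := fun h0 => hFb (by rw [pqFac_succ, h0, zero_mul])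
  unfold pqBinom
  rw [h1, h2, h3, h4]
  rw [show a+b+2 = (a+b+1)+1 from rfl, pqFac_succ p q (a+b+1),
    show a+b+1 = (a+b)+1 from rfl, pqFac_succ p q (a+b),
    pqFac_succ p q a, pqFac_succ p q b,
    pow_sub_eq p q hpq, pqNum_key p q hpq a b]
  field_simp


/-- The recurrence `H_{n+1}(x;p,q) = H_n(px;p,q) + x p^n H_n(p⁻¹x;p,q)
 - (p^n - q^n) x H_{n-1}(x;p,q)` for `n ≥ 1`. -/
theorem pqRogersSzego_recurrence (p q : ℝ) (hp : p ≠ 0) (n : ℕ)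
    (h : ∀ j, 1 ≤ j → j ≤ n + 1 → p ^ j ≠ q ^ j) (hn : 1 ≤ n) (x : ℝ) :
    pqRogersSzego p q (n + 1) x =
      pqRogersSzego p q n (p * x) + x * p ^ n * pqRogersSzego p q n (p⁻¹ * x)
        - (p ^ n - q ^ n) * x * pqRogersSzego p q (n - 1) x := by
  have hpq : p - q ≠ 0 := sub_ne_zero.mpr (by simpa using h 1 le_rfl (by omega))
  obtain ⟨m, rfl⟩ : ∃ m, n = m + 1 := ⟨n - 1, by omega⟩
  have hFac : ∀ k, k ≤ m + 2 → pqFac p q k ≠ 0 := by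
    intro k hk
    rw [pqFac, Finset.prod_ne_zero_iff]
    intro j hj
    exact div_ne_zero (sub_ne_zero.mpr (h (j+1) (by omega)
      (by simp at hj; omega))) hpq
  -- the three coefficient families
  set f1 : ℕ → ℝ := fun k => if k ≤ m + 1 then pqBinom p q (m+1) k * p ^ k else 0 with hf1
  set f2 : ℕ → ℝ := fun k => if 1 ≤ k then pqBinom p q (m+1) (k-1) * p ^ (m+2-k) else 0 with hf2
  set f3 : ℕ → ℝ := fun k =>
    if 1 ≤ k ∧ k ≤ m + 1 then (p^(m+1) - q^(m+1)) * pqBinom p q m (k-1) else 0 with hf3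
  have key : ∀ k ∈ Finset.range (m+3), pqBinom p q (m+2) k = f1 k + f2 k - f3 k := by
    intro k hk
    simp only [Finset.mem_range] at hk
    rcases Nat.eq_zero_or_pos k with rfl | hk1
    · simp only [hf1, hf2, hf3]
      norm_num
      rw [pqBinom_zero p q (m+2) (hFac _ le_rfl), pqBinom_zero p q (m+1) (hFac _ (by omega))]
    rcases Nat.lt_or_ge k (m+2) with hk2 | hk2
    · -- 1 ≤ k ≤ m+1 : main case
      obtain ⟨a, rfl⟩ : ∃ a, k = a + 1 := ⟨k - 1, by omega⟩
      obtain ⟨b, hb⟩ : ∃ b, m + 1 = a + b + 1 := ⟨m - a, by omega⟩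
      simp only [hf1, hf2, hf3]
      rw [if_pos (by omega), if_pos (by omega), if_pos ⟨by omega, by omega⟩]
      have hstep := pqBinom_main p q hpq a b (hFac _ (by omega)) (hFac _ (by omega))
      rw [show m = a + b by omega, show a + b + 2 - (a+1) = b + 1 by omega,
        show a + 1 - 1 = a from rfl, hstep]
      ring
    · -- k = m+2
      have : k = m + 2 := by omega
      subst this
      simp only [hf1, hf2, hf3]
      rw [if_neg (by omega), if_pos (by omega), if_neg (by omega)]
      rw [pqBinom_self p q (m+2) (hFac _ le_rfl), show m + 2 - 1 = m + 1 from rfl,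
        pqBinom_self p q (m+1) (hFac _ (by omega)), Nat.sub_self, pow_zero]
      ring
  have lhs_eq : pqRogersSzego p q (m+2) x
      = (∑ k ∈ Finset.range (m+3), f1 k * x ^ k)
        + (∑ k ∈ Finset.range (m+3), f2 k * x ^ k)
        - (∑ k ∈ Finset.range (m+3), f3 k * x ^ k) := by
    rw [pqRogersSzego, ← Finset.sum_add_distrib, ← Finset.sum_sub_distrib]
    refine Finset.sum_congr rfl fun k hk => ?_
    rw [key k hk]; ring
  rw [show m + 1 + 1 = m + 2 from rfl, lhs_eq]
  have e1 : (∑ k ∈ Finset.range (m+3), f1 k * x ^ k) = pqRogersSzego p q (m+1) (p * x) := by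
    rw [pqRogersSzego, Finset.sum_range_succ, hf1]
    simp only [if_neg (by omega : ¬ (m+2 ≤ m+1)), zero_mul, add_zero]
    refine Finset.sum_congr rfl fun k hk => ?_
    simp only [Finset.mem_range] at hk
    rw [if_pos (by omega), mul_pow]
    ring
  have e2 : (∑ k ∈ Finset.range (m+3), f2 k * x ^ k)
      = x * p ^ (m+1) * pqRogersSzego p q (m+1) (p⁻¹ * x) := by
    rw [pqRogersSzego, Finset.mul_sum, Finset.sum_range_succ', hf2]
    simp only [if_neg (by omega : ¬ (1 ≤ 0)), zero_mul, add_zero]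
    refine Finset.sum_congr rfl fun k hk => ?_
    simp only [Finset.mem_range] at hk
    rw [if_pos (by omega), Nat.add_sub_cancel, show m + 2 - (k+1) = m + 1 - k by omega,
      pow_sub₀ p hp (by omega : k ≤ m + 1), mul_pow, inv_pow]
    field_simp
    ring
  have e3 : (∑ k ∈ Finset.range (m+3), f3 k * x ^ k)
      = (p ^ (m+1) - q ^ (m+1)) * x * pqRogersSzego p q (m+1-1) x := by
    rw [show m + 1 - 1 = m from rfl, pqRogersSzego, Finset.mul_sum,
      Finset.sum_range_succ', hf3]
    simp only [if_neg (by simp : ¬ (1 ≤ 0 ∧ (0:ℕ) ≤ m + 1)), zero_mul, add_zero]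
    rw [Finset.sum_range_succ, if_neg (by omega : ¬ (1 ≤ m + 1 + 1 ∧ m + 1 + 1 ≤ m + 1)),
      zero_mul, add_zero]
    refine Finset.sum_congr rfl fun k hk => ?_
    simp only [Finset.mem_range] at hk
    rw [if_pos ⟨by omega, by omega⟩, Nat.add_sub_cancel]
    ring
  rw [e1, e2, e3]
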